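/- Let φ : A⁺ → S be a surjective semigroup homomorphism onto a finite semigroup S, where A is a finite alphabet. Define the two-sided Cayley graph Γ_φ with vertex set S¹ × S¹ and an edge from (s₁,t₁) to (s₂,t₂) labeled a ∈ A whenever s₁φ(a) = s₂ and t₁ = φ(a)t₂. For u ∈ A⁺ let p_u be the unique path from (I, φ(u)) to (φ(u), I) labeled u, and let C(p_u) be the set of strongly connected components of Γ_φ meeting p_u. Then the relation u ≈_φ v defined by φ(u) = φ(v) and C(p_u) = C(p_v) is a congruence on A⁺. -/
import Mathlib


variable {A S : Type*}

/-- Image of a word under the extension of `φ` to the free monoid, in `S¹ = WithOne S`. -/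
def phiStar [Semigroup S] (φ : A → S) (w : List A) : WithOne S :=
  (w.map fun a => (φ a : WithOne S)).prod

/-- `φ` induces a surjective homomorphism `A⁺ → S`. -/
def PlusSurj [Semigroup S] (φ : A → S) : Prop :=
  ∀ s : S, ∃ w : List A, w ≠ [] ∧ phiStar φ w = (s : WithOne S)

/-- An edge `((s₁,t₁), a, (s₂,t₂))` of the two-sided Cayley graph `Γ_φ`. -/
def IsEdge [Semigroup S] (φ : A → S)
    (e : (WithOne S × WithOne S) × A × (WithOne S × WithOne S)) : Prop :=
  e.1.1 * (φ e.2.1 : WithOne S) = e.2.2.1 ∧ e.1.2 = (φ e.2.1 : WithOne S) * e.2.2.2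

/-- There is a path labeled `w` from `p` to `q` in `Γ_φ`. -/
def HasPath [Semigroup S] (φ : A → S) (p q : WithOne S × WithOne S) (w : List A) : Prop :=
  p.1 * phiStar φ w = q.1 ∧ p.2 = phiStar φ w * q.2

/-- There is a (possibly empty) path from `p` to `q` in `Γ_φ`. -/
def Reach [Semigroup S] (φ : A → S) (p q : WithOne S × WithOne S) : Prop :=
  ∃ w : List A, HasPath φ p q w

/-- `p` and `q` lie in the same strongly connected component of `Γ_φ`. -/
def SameSCC [Semigroup S] (φ : A → S) (p q : WithOne S × WithOne S) : Prop :=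
  Reach φ p q ∧ Reach φ q p

/-- `p` is a vertex of the canonical path `p_u` of the word `u` in `Γ_φ`. -/
def OnPath [Semigroup S] (φ : A → S) (u : List A) (p : WithOne S × WithOne S) : Prop :=
  ∃ u₁ u₂ : List A, u = u₁ ++ u₂ ∧ p = (phiStar φ u₁, phiStar φ u₂)

/-- The paths `p_u` and `p_v` meet the same strongly connected components of `Γ_φ`,
i.e. `C(p_u) = C(p_v)`. -/
def SameComponents [Semigroup S] (φ : A → S) (u v : List A) : Prop :=
  (∀ p, OnPath φ u p → ∃ q, OnPath φ v q ∧ SameSCC φ p q) ∧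
  (∀ q, OnPath φ v q → ∃ p, OnPath φ u p ∧ SameSCC φ p q)

/-- The two-sided connected congruence `u ≈_φ v`. -/
def ConnCong [Semigroup S] (φ : A → S) (u v : List A) : Prop :=
  phiStar φ u = phiStar φ v ∧ SameComponents φ u v

/-- `e` is an edge traversed by the canonical path `p_u` in `Γ_φ`. -/
def EdgeOfPath [Semigroup S] (φ : A → S) (u : List A)
    (e : (WithOne S × WithOne S) × A × (WithOne S × WithOne S)) : Prop :=
  ∃ u₁ u₂ : List A, u = u₁ ++ e.2.1 :: u₂ ∧
    e.1 = (phiStar φ u₁, phiStar φ (e.2.1 :: u₂)) ∧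
    e.2.2 = (phiStar φ (u₁ ++ [e.2.1]), phiStar φ u₂)

/-- `e` is a transition edge traversed by `p_u`: an edge of `p_u` whose endpoints lie in
distinct strongly connected components of `Γ_φ`. -/
def IsTransitionOfPath [Semigroup S] (φ : A → S) (u : List A)
    (e : (WithOne S × WithOne S) × A × (WithOne S × WithOne S)) : Prop :=
  EdgeOfPath φ u e ∧ ¬ SameSCC φ e.1 e.2.2

/-- The two-sided Karnofsky–Rhodes congruence `u ≡_φ v`: same image under `φ` and same set
of transition edges. -/
def KRCong [Semigroup S] (φ : A → S) (u v : List A) : Prop :=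
  phiStar φ u = phiStar φ v ∧
  ∀ e, IsTransitionOfPath φ u e ↔ IsTransitionOfPath φ v e


section Aux

variable [Semigroup S] (φ : A → S)

lemma phiStar_nil : phiStar φ [] = 1 := rfl

lemma phiStar_append (u w : List A) :
    phiStar φ (u ++ w) = phiStar φ u * phiStar φ w := by
  simp [phiStar]

lemma reach_refl (p : WithOne S × WithOne S) : Reach φ p p :=
  ⟨[], by simp [HasPath, phiStar_nil]⟩

lemma reach_trans {p q r : WithOne S × WithOne S}
    (h₁ : Reach φ p q) (h₂ : Reach φ q r) : Reach φ p r := by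
  obtain ⟨x, hx1, hx2⟩ := h₁
  obtain ⟨y, hy1, hy2⟩ := h₂
  exact ⟨x ++ y, by rw [phiStar_append, ← mul_assoc, hx1, hy1],
    by rw [phiStar_append, mul_assoc, ← hy2, hx2]⟩

lemma sameSCC_refl (p : WithOne S × WithOne S) : SameSCC φ p p :=
  ⟨reach_refl φ p, reach_refl φ p⟩

lemma sameSCC_symm {p q : WithOne S × WithOne S} (h : SameSCC φ p q) :
    SameSCC φ q p := ⟨h.2, h.1⟩

lemma sameSCC_trans {p q r : WithOne S × WithOne S}
    (h₁ : SameSCC φ p q) (h₂ : SameSCC φ q r) : SameSCC φ p r :=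
  ⟨reach_trans φ h₁.1 h₂.1, reach_trans φ h₂.2 h₁.2⟩

lemma reach_mul_right {p q : WithOne S × WithOne S} (t : WithOne S)
    (h : Reach φ p q) : Reach φ (p.1, p.2 * t) (q.1, q.2 * t) := by
  obtain ⟨x, hx1, hx2⟩ := h
  exact ⟨x, hx1, by simp only [← mul_assoc, ← hx2]⟩

lemma reach_mul_left {p q : WithOne S × WithOne S} (s : WithOne S)
    (h : Reach φ p q) : Reach φ (s * p.1, p.2) (s * q.1, q.2) := by
  obtain ⟨x, hx1, hx2⟩ := h
  exact ⟨x, by simp only [mul_assoc, hx1], hx2⟩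

lemma sameSCC_mul_right {p q : WithOne S × WithOne S} (t : WithOne S)
    (h : SameSCC φ p q) : SameSCC φ (p.1, p.2 * t) (q.1, q.2 * t) :=
  ⟨reach_mul_right φ t h.1, reach_mul_right φ t h.2⟩

lemma sameSCC_mul_left {p q : WithOne S × WithOne S} (s : WithOne S)
    (h : SameSCC φ p q) : SameSCC φ (s * p.1, p.2) (s * q.1, q.2) :=
  ⟨reach_mul_left φ s h.1, reach_mul_left φ s h.2⟩

lemma sameComponents_refl (u : List A) : SameComponents φ u u :=
  ⟨fun p hp => ⟨p, hp, sameSCC_refl φ p⟩, fun q hq => ⟨q, hq, sameSCC_refl φ q⟩⟩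

lemma sameComponents_symm {u v : List A} (h : SameComponents φ u v) :
    SameComponents φ v u :=
  ⟨fun p hp => by obtain ⟨q, hq, hs⟩ := h.2 p hp; exact ⟨q, hq, sameSCC_symm φ hs⟩,
   fun q hq => by obtain ⟨p, hp, hs⟩ := h.1 q hq; exact ⟨p, hp, sameSCC_symm φ hs⟩⟩

lemma sameComponents_trans {u v w : List A} (h₁ : SameComponents φ u v)
    (h₂ : SameComponents φ v w) : SameComponents φ u w := by
  constructor
  · intro p hp
    obtain ⟨q, hq, hs⟩ := h₁.1 p hp
    obtain ⟨r, hr, hs'⟩ := h₂.1 q hq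
    exact ⟨r, hr, sameSCC_trans φ hs hs'⟩
  · intro r hr
    obtain ⟨q, hq, hs⟩ := h₂.2 r hr
    obtain ⟨p, hp, hs'⟩ := h₁.2 q hq
    exact ⟨p, hp, sameSCC_trans φ hs' hs⟩

/-- Main compatibility lemma: right multiplication. -/
lemma sameComponents_append_right {u v : List A} (w : List A)
    (huv : phiStar φ u = phiStar φ v) (h : SameComponents φ u v) :
    (∀ p, OnPath φ (u ++ w) p → ∃ q, OnPath φ (v ++ w) q ∧ SameSCC φ p q) := by
  rintro p ⟨x, y, hxy, rfl⟩
  rcases List.append_eq_append_iff.mp hxy.symm with ⟨a, ha1, ha2⟩ | ⟨c, hc1, hc2⟩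
  · -- x ++ a = u, y = a ++ w : p is on the `u`-portion
    obtain ⟨q, ⟨v₁, v₂, hv, rfl⟩, hs⟩ := h.1 (phiStar φ x, phiStar φ a)
      ⟨x, a, ha1, rfl⟩
    refine ⟨(phiStar φ v₁, phiStar φ (v₂ ++ w)), ⟨v₁, v₂ ++ w, by rw [hv, List.append_assoc], rfl⟩, ?_⟩
    have := sameSCC_mul_right φ (phiStar φ w) hs
    simpa [ha2, phiStar_append] using this
  · -- x = u ++ c, w = c ++ y : p is on the `w`-portion, identical on both sides
    refine ⟨(phiStar φ (v ++ c), phiStar φ y), ⟨v ++ c, y, by rw [hc2, List.append_assoc], rfl⟩, ?_⟩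
    have : phiStar φ x = phiStar φ (v ++ c) := by
      rw [hc1, phiStar_append, phiStar_append, huv]
    rw [this]
    exact sameSCC_refl φ _

/-- Main compatibility lemma: left multiplication. -/
lemma sameComponents_append_left {u v : List A} (w : List A)
    (huv : phiStar φ u = phiStar φ v) (h : SameComponents φ u v) :
    (∀ p, OnPath φ (w ++ u) p → ∃ q, OnPath φ (w ++ v) q ∧ SameSCC φ p q) := by
  rintro p ⟨x, y, hxy, rfl⟩
  rcases List.append_eq_append_iff.mp hxy.symm with ⟨a, ha1, ha2⟩ | ⟨c, hc1, hc2⟩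
  · -- x ++ a = w, y = a ++ u : p is on the `w`-portion
    refine ⟨(phiStar φ x, phiStar φ (a ++ v)), ⟨x, a ++ v, by rw [← List.append_assoc, ha1], rfl⟩, ?_⟩
    have : phiStar φ y = phiStar φ (a ++ v) := by
      rw [ha2, phiStar_append, phiStar_append, huv]
    rw [this]
    exact sameSCC_refl φ _
  · -- x = w ++ c, u = c ++ y : p is on the `u`-portion
    obtain ⟨q, ⟨v₁, v₂, hv, rfl⟩, hs⟩ := h.1 (phiStar φ c, phiStar φ y)
      ⟨c, y, hc2, rfl⟩
    refine ⟨(phiStar φ (w ++ v₁), phiStar φ v₂), ⟨w ++ v₁, v₂, by rw [hv, List.append_assoc], rfl⟩, ?_⟩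
    have := sameSCC_mul_left φ (phiStar φ w) hs
    simpa [hc1, phiStar_append] using this

end Aux

/-- The relation `≈_φ` (same image under `φ`, and the canonical paths meet the same strongly
connected components of the two-sided Cayley graph) is a congruence on `A⁺`. -/
theorem connCong_is_congruence [Finite A] [Finite S] [Semigroup S]
    (φ : A → S) (hφ : PlusSurj φ) :
    (∀ u : List A, u ≠ [] → ConnCong φ u u) ∧
    (∀ u v : List A, u ≠ [] → v ≠ [] → ConnCong φ u v → ConnCong φ v u) ∧
    (∀ u v w : List A, u ≠ [] → v ≠ [] → w ≠ [] →
      ConnCong φ u v → ConnCong φ v w → ConnCong φ u w) ∧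
    (∀ u v w : List A, u ≠ [] → v ≠ [] → w ≠ [] → ConnCong φ u v →
      ConnCong φ (u ++ w) (v ++ w) ∧ ConnCong φ (w ++ u) (w ++ v)) := by
  refine ⟨fun u _ => ⟨rfl, sameComponents_refl φ u⟩,
    fun u v _ _ h => ⟨h.1.symm, sameComponents_symm φ h.2⟩,
    fun u v w _ _ _ h₁ h₂ => ⟨h₁.1.trans h₂.1, sameComponents_trans φ h₁.2 h₂.2⟩,
    fun u v w _ _ _ h => ?_⟩
  obtain ⟨him, hc⟩ := h
  constructor
  · refine ⟨by rw [phiStar_append, phiStar_append, him], ?_, ?_⟩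
    · exact sameComponents_append_right φ w him hc
    · intro q hq
      obtain ⟨p, hp, hs⟩ := sameComponents_append_right φ w him.symm
        (sameComponents_symm φ hc) q hq
      exact ⟨p, hp, sameSCC_symm φ hs⟩
  · refine ⟨by rw [phiStar_append, phiStar_append, him], ?_, ?_⟩
    · exact sameComponents_append_left φ w him hc
    · intro q hq
      obtain ⟨p, hp, hs⟩ := sameComponents_append_left φ w him.symm
        (sameComponents_symm φ hc) q hq
      exact ⟨p, hp, sameSCC_symm φ hs⟩
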